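/- arXiv:2112.05896 — 5 statements merged into one kernel-verified Lean document; each statement's English description precedes it below -/
import Mathlib

section
/- Let F : ℤ × ℤ → ℝ be a symmetric function satisfying the three functional equations F(1+b+c,a) + F(1+c+a,b) = F(a,b) + F(b,c) + F(c,a), F(1+a+b,c) + F(1+b+c,a) = F(a,b) + F(b,c) + F(c,a), and F(1+c+a,b) + F(1+a+b,c) = F(a,b) + F(b,c) + F(c,a) for all a, b, c. Then there is a constant κ such that F(a,b) = κ(a+b+2)/2 · 2, i.e., F(a,b) = κ(a+b+2) for all a,b (with κ = F(0,0)/2). -/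
/-- If a symmetric function `F : ℤ × ℤ → ℝ` satisfies the three functional
equations arising from the super Jacobi identity for the deformed bracket with
a closed 1-form, then `F (a, b) = κ * (a + b + 2)` with `κ = F (0,0) / 2`. -/
theorem stmt_0 (F : ℤ × ℤ → ℝ)
    (hsymm : ∀ a b : ℤ, F (a, b) = F (b, a))
    (h1 : ∀ a b c : ℤ,
      F (1 + b + c, a) + F (1 + c + a, b) = F (a, b) + F (b, c) + F (c, a))
    (h2 : ∀ a b c : ℤ,
      F (1 + a + b, c) + F (1 + b + c, a) = F (a, b) + F (b, c) + F (c, a))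
    (h3 : ∀ a b c : ℤ,
      F (1 + c + a, b) + F (1 + a + b, c) = F (a, b) + F (b, c) + F (c, a)) :
    ∃ κ : ℝ, κ = F (0, 0) / 2 ∧ ∀ a b : ℤ, F (a, b) = κ * ((a : ℝ) + b + 2) := by
  set κ := F (0, 0) / 2 with hκ
  refine ⟨κ, rfl, ?_⟩
  -- F depends only on the sum of its arguments
  have key : ∀ a b c : ℤ, F (1 + c + a, b) = F (1 + a + b, c) := by
    intro a b c
    have := h1 a b c
    have := h2 a b c
    linarith
  have hsum : ∀ x y : ℤ, F (x, y) = F (x + y, 0) := by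
    intro x y
    have := key (x - 1) y 0
    simpa [show 1 + 0 + (x - 1) = x by ring, show 1 + (x - 1) + y = x + y by ring]
      using this
  -- recurrence
  have hrec : ∀ a : ℤ, F (a + 1, 0) = F (a, 0) + κ := by
    intro a
    have := h1 a 0 0
    have hs := hsymm 0 a
    simp only [add_zero] at this
    rw [show (1:ℤ) + a = a + 1 by ring] at this
    have h1a : F (1, a) = F (a + 1, 0) := by
      rw [hsum 1 a, show (1:ℤ) + a = a + 1 by ring]
    rw [hκ]; linarith
  have hlin : ∀ n : ℤ, F (n, 0) = κ * ((n : ℝ) + 2) := by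
    intro n
    induction n using Int.induction_on with
    | zero =>
      rw [hκ]; push_cast; ring
    | succ k ih =>
      have := hrec k
      rw [this, ih]
      push_cast
      ring
    | pred k ih =>
      have := hrec (-(k : ℤ) - 1)
      rw [show -(k:ℤ) - 1 + 1 = -k by ring] at this
      have : F (-(k:ℤ) - 1, 0) = F (-(k:ℤ), 0) - κ := by linarith
      rw [this, ih]
      push_cast
      ring
  intro a b
  rw [hsum a b, hlin (a + b)]
  push_cast
  ring
end

section
/- Let F : ℤ × ℤ → ℝ be a symmetric function satisfying F(1+b+c,a) + F(1+c+a,b) = 0, F(1+a+b,c) + F(1+b+c,a) = 0, F(1+c+a,b) + F(1+a+b,c) = 0, and F(a,b) + F(b,c) + F(c,a) = 0 for all a,b,c ∈ ℤ. Then F is identically zero. -/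
/-- If a symmetric function `F : ℤ × ℤ → ℝ` satisfies the four functional
equations arising from the super Jacobi identity for the deformed bracket with
a non-closed 1-form, then `F` is identically zero. -/
theorem stmt_1 (F : ℤ × ℤ → ℝ)
    (hsymm : ∀ a b : ℤ, F (a, b) = F (b, a))
    (h1 : ∀ a b c : ℤ, F (1 + b + c, a) + F (1 + c + a, b) = 0)
    (h2 : ∀ a b c : ℤ, F (1 + a + b, c) + F (1 + b + c, a) = 0)
    (h3 : ∀ a b c : ℤ, F (1 + c + a, b) + F (1 + a + b, c) = 0)
    (h4 : ∀ a b c : ℤ, F (a, b) + F (b, c) + F (c, a) = 0) :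
    ∀ a b : ℤ, F (a, b) = 0 := by
  intro a b
  have hd := h4 a a a
  have h := h4 a b a
  have hs := hsymm a b
  linarith
end

section
/- Let φ be a closed 1-form on a smooth manifold M and t ∈ ℝ. The bracket [α,β]_{t,φ} = (-1)^a d(α∧β) + ((a+b+2)/2) α ∧ (tφ) ∧ β satisfies the super Jacobi identity: the cyclic sum over (α,β,γ) of (-1)^{(a+1)(c+1)} [[α,β]_{t,φ}, γ]_{t,φ} vanishes, for α ∈ Ω^a, β ∈ Ω^b, γ ∈ Ω^c. -/
private lemma stmt9_npow (n : ℕ) : (-1:ℝ)^n = if n % 2 = 0 then 1 else -1 := by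
  rcases Nat.even_or_odd n with h|h
  · simp [Nat.even_iff.mp h, h.neg_one_pow]
  · simp [Nat.odd_iff.mp h, h.neg_one_pow]

set_option maxHeartbeats 2000000 in
/-- Super Jacobi identity for the deformed standard bracket
`[α,β]_{t,φ} = (-1)^a d(α∧β) + ((a+b+2)/2) α ∧ tφ ∧ β` on differential forms
with `φ` a closed 1-form: the cyclic sum
`Σ (-1)^{(a+1)(c+1)} [[α,β]_{t,φ}, γ]_{t,φ}` vanishes. -/
theorem stmt_9 {A : Type*} [Ring A] [Algebra ℝ A]
    (Ω : ℕ → Submodule ℝ A)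
    (hmul : ∀ (p q : ℕ) (x y : A), x ∈ Ω p → y ∈ Ω q → x * y ∈ Ω (p + q))
    (hcomm : ∀ (p q : ℕ) (x y : A), x ∈ Ω p → y ∈ Ω q →
      x * y = ((-1 : ℝ) ^ (p * q)) • (y * x))
    (d : A →ₗ[ℝ] A)
    (hdeg : ∀ (p : ℕ) (x : A), x ∈ Ω p → d x ∈ Ω (p + 1))
    (hd2 : ∀ x : A, d (d x) = 0)
    (hleib : ∀ (p : ℕ) (x y : A), x ∈ Ω p →
      d (x * y) = d x * y + ((-1 : ℝ) ^ p) • (x * d y))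
    (t : ℝ) (φ : A) (hφ : φ ∈ Ω 1) (hclosed : d φ = 0)
    (a b c : ℕ) (α β γ : A) (hα : α ∈ Ω a) (hβ : β ∈ Ω b) (hγ : γ ∈ Ω c) :
    (fun Bk : ℕ → ℕ → A → A → A =>
      ((-1 : ℝ) ^ ((a + 1) * (c + 1))) • Bk (a + b + 1) c (Bk a b α β) γ +
        ((-1 : ℝ) ^ ((b + 1) * (a + 1))) • Bk (b + c + 1) a (Bk b c β γ) α +
        ((-1 : ℝ) ^ ((c + 1) * (b + 1))) • Bk (c + a + 1) b (Bk c a γ α) β = 0)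
      (fun p q x y =>
        ((-1 : ℝ) ^ p) • d (x * y) +
          (((p : ℝ) + (q : ℝ) + 2) / 2) • (x * (t • φ) * y)) := by
  beta_reduce
  set ψ : A := t • φ with hψdef
  have hψ : ψ ∈ Ω 1 := Submodule.smul_mem _ t hφ
  have hdψ : d ψ = 0 := by rw [hψdef, map_smul, hclosed, smul_zero]
  have comm : ∀ (p q : ℕ) (x y : A), x ∈ Ω p → y ∈ Ω q →
      y * x = ((-1:ℝ)^(p*q)) • (x * y) := by
    intro p q x y hx hy
    rw [hcomm q p y x hy hx, Nat.mul_comm]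
  have hψψ : ψ * ψ = 0 := by
    have h := hcomm 1 1 ψ ψ hψ hψ
    norm_num at h
    have h2 : (2:ℝ) • (ψ*ψ) = 0 := by
      rw [two_smul]; nth_rewrite 1 [h]; exact neg_add_cancel _
    rcases smul_eq_zero.mp h2 with h'|h'
    · norm_num at h'
    · exact h'
  have hψψw : ∀ w : A, ψ * (ψ * w) = 0 := fun w => by rw [← mul_assoc, hψψ, zero_mul]
  have swap : ∀ (P : ℕ) (u : A), u ∈ Ω P → ∀ w : A,
      u * (ψ * w) = ((-1:ℝ)^P) • (ψ * (u * w)) := by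
    intro P u hu w
    rw [← mul_assoc, comm 1 P ψ u hψ hu, Nat.one_mul, smul_mul_assoc, mul_assoc]
  have hdα := hdeg a α hα
  have hdβ := hdeg b β hβ
  have hdγ := hdeg c γ hγ
  have expand : ∀ (p q r : ℕ) (x y z : A), x ∈ Ω p → y ∈ Ω q → z ∈ Ω r →
      ((-1:ℝ)^(p+q+1)) • d ((((-1:ℝ)^p) • d (x*y) + (((p:ℝ)+(q:ℝ)+2)/2) • (x * ψ * y)) * z)
        + (((((p+q+1 : ℕ)):ℝ) + (r:ℝ) + 2)/2) • ((((-1:ℝ)^p) • d (x*y) + (((p:ℝ)+(q:ℝ)+2)/2) • (x * ψ * y)) * ψ * z)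
      = ((-1:ℝ)^p) • (d x * (y * d z)) + x * (d y * d z)
        + (((-1:ℝ)^(q+1)) * (((r:ℝ)+1)/2)) • (ψ * (d x * (y * z)))
        + (((-1:ℝ)^(p+q+1)) * (((r:ℝ)+1)/2)) • (ψ * (x * (d y * z)))
        + (((-1:ℝ)^p) * (((p:ℝ)+(q:ℝ)+2)/2)) • (ψ * (x * (y * d z))) := by
    intro p q r x y z hx hy hz
    have hdx := hdeg p x hx
    have hdy := hdeg q y hy
    have hdz := hdeg r z hz
    have hxy := hmul p q x y hx hy
    have hdxy : d (x*y) ∈ Ω (p+q+1) := hdeg _ _ hxy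
    have hxψ : x * ψ ∈ Ω (p+1) := hmul p 1 x ψ hx hψ
    have hxψy : x * ψ * y ∈ Ω (p+q+1) := by
      have h := hmul (p+1) q _ y hxψ hy
      rwa [show p+1+q = p+q+1 from by omega] at h
    simp only [add_mul, smul_mul_assoc, map_add, map_smul]
    rw [hleib (p+q+1) _ z hdxy, hd2, zero_mul, zero_add,
        hleib (p+q+1) _ z hxψy,
        hleib (p+1) _ y hxψ,
        hleib p x ψ hx, hdψ, mul_zero, smul_zero, add_zero,
        hleib p x y hx]
    simp only [mul_assoc, add_mul, smul_mul_assoc, mul_smul_comm, smul_smul, smul_add,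
      mul_add, swap p x hx, swap (p+1) (d x) hdx, swap q y hy, swap (q+1) (d y) hdy,
      hψψw, mul_zero, smul_zero, add_zero, zero_add]
    match_scalars <;>
    · rcases Nat.mod_two_eq_zero_or_one p with hp|hp <;>
      rcases Nat.mod_two_eq_zero_or_one q with hq|hq <;>
      rcases Nat.mod_two_eq_zero_or_one r with hr|hr <;>
      simp [stmt9_npow, Nat.add_mod, Nat.mul_mod, hp, hq, hr] <;> ring
  rw [expand a b c α β γ hα hβ hγ, expand b c a β γ α hβ hγ hα,
      expand c a b γ α β hγ hα hβ]
  have e1 : d β * (γ * d α) = ((-1:ℝ)^((a+1)*(b+1+c))) • (d α * (d β * γ)) := by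
    rw [← mul_assoc, comm (a+1) (b+1+c) (d α) (d β * γ) hdα (hmul _ _ _ _ hdβ hγ)]
  have e2 : β * (d γ * d α) = ((-1:ℝ)^((a+1)*(b+(c+1)))) • (d α * (β * d γ)) := by
    rw [← mul_assoc, comm (a+1) (b+(c+1)) (d α) (β * d γ) hdα (hmul _ _ _ _ hβ hdγ)]
  have e3 : ψ * (d β * (γ * α)) = ((-1:ℝ)^(a*(b+1+c))) • (ψ * (α * (d β * γ))) := by
    have h : d β * (γ * α) = ((-1:ℝ)^(a*(b+1+c))) • (α * (d β * γ)) := by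
      rw [← mul_assoc, comm a (b+1+c) α (d β * γ) hα (hmul _ _ _ _ hdβ hγ)]
    rw [h, mul_smul_comm]
  have e4 : ψ * (β * (d γ * α)) = ((-1:ℝ)^(a*(b+(c+1)))) • (ψ * (α * (β * d γ))) := by
    have h : β * (d γ * α) = ((-1:ℝ)^(a*(b+(c+1)))) • (α * (β * d γ)) := by
      rw [← mul_assoc, comm a (b+(c+1)) α (β * d γ) hα (hmul _ _ _ _ hβ hdγ)]
    rw [h, mul_smul_comm]
  have e5 : ψ * (β * (γ * d α)) = ((-1:ℝ)^((a+1)*(b+c))) • (ψ * (d α * (β * γ))) := by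
    have h : β * (γ * d α) = ((-1:ℝ)^((a+1)*(b+c))) • (d α * (β * γ)) := by
      rw [← mul_assoc, comm (a+1) (b+c) (d α) (β * γ) hdα (hmul _ _ _ _ hβ hγ)]
    rw [h, mul_smul_comm]
  have f1 : d γ * (α * d β) = ((-1:ℝ)^((a+(b+1))*(c+1))) • (α * (d β * d γ)) := by
    rw [comm (a+(b+1)) (c+1) (α * d β) (d γ) (hmul _ _ _ _ hα hdβ) hdγ, mul_assoc]
  have f2 : γ * (d α * d β) = ((-1:ℝ)^((a+1+(b+1))*c)) • (d α * (d β * γ)) := by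
    rw [comm (a+1+(b+1)) c (d α * d β) γ (hmul _ _ _ _ hdα hdβ) hγ, mul_assoc]
  have f3 : ψ * (d γ * (α * β)) = ((-1:ℝ)^((a+b)*(c+1))) • (ψ * (α * (β * d γ))) := by
    have h : d γ * (α * β) = ((-1:ℝ)^((a+b)*(c+1))) • (α * (β * d γ)) := by
      rw [comm (a+b) (c+1) (α * β) (d γ) (hmul _ _ _ _ hα hβ) hdγ, mul_assoc]
    rw [h, mul_smul_comm]
  have f4 : ψ * (γ * (d α * β)) = ((-1:ℝ)^((a+1+b)*c)) • (ψ * (d α * (β * γ))) := by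
    have h : γ * (d α * β) = ((-1:ℝ)^((a+1+b)*c)) • (d α * (β * γ)) := by
      rw [comm (a+1+b) c (d α * β) γ (hmul _ _ _ _ hdα hβ) hγ, mul_assoc]
    rw [h, mul_smul_comm]
  have f5 : ψ * (γ * (α * d β)) = ((-1:ℝ)^((a+(b+1))*c)) • (ψ * (α * (d β * γ))) := by
    have h : γ * (α * d β) = ((-1:ℝ)^((a+(b+1))*c)) • (α * (d β * γ)) := by
      rw [comm (a+(b+1)) c (α * d β) γ (hmul _ _ _ _ hα hdβ) hγ, mul_assoc]
    rw [h, mul_smul_comm]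
  rw [e1, e2, e3, e4, e5, f1, f2, f3, f4, f5]
  match_scalars <;>
  · rcases Nat.mod_two_eq_zero_or_one a with ha'|ha' <;>
    rcases Nat.mod_two_eq_zero_or_one b with hb'|hb' <;>
    rcases Nat.mod_two_eq_zero_or_one c with hc'|hc' <;>
    simp [stmt9_npow, Nat.add_mod, Nat.mul_mod, ha', hb', hc'] <;> ring
end

section
/- Consider the deformed standard bracket on Λ•g* for the 2-dimensional Lie algebra g with [y₁,y₂]=y₁, dual basis z₁, z₂, and deforming closed 1-form φ = z₂: [α,β]_{t,φ} = (-1)^a d(α∧β) + ((a+b+2)/2) α ∧ tz₂ ∧ β. Then the boundary operator on the weight-(−3) chain complex satisfies ∂(z_j ⊼ 1) = δ_j^1 (1 + (3/2)t) z₁∧z₂ and ∂(⊼³1) = t z₂ ⊼ 1, and consequently the weight-(−3) Betti numbers in degrees 1,2,3 are (δ_{2+3t,0}, δ_{2+3t,0} + δ_{t,0}, δ_{t,0}). -/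
/-- Model of the exterior algebra `Λ•g*` of the nonabelian 2-dimensional Lie
algebra `g` (with `[y₁,y₂] = y₁`): a quadruple of coordinates in the basis
`1, z₁, z₂, z₁∧z₂`. -/
abbrev LamG : Type := ℝ × (ℝ × ℝ) × ℝ

namespace LamG

/-- Wedge product in the coordinates `(c₀, (c₁, c₂), c₁₂)`. -/
noncomputable def wedge (x y : LamG) : LamG :=
  (x.1 * y.1,
   (x.1 * y.2.1.1 + x.2.1.1 * y.1, x.1 * y.2.1.2 + x.2.1.2 * y.1),
   x.1 * y.2.2 + x.2.2 * y.1 + (x.2.1.1 * y.2.1.2 - x.2.1.2 * y.2.1.1))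

/-- The Chevalley–Eilenberg differential: `d z₁ = -z₁∧z₂`, `d z₂ = 0`,
`d 1 = 0`, `d (z₁∧z₂) = 0`. -/
noncomputable def dCE (x : LamG) : LamG := (0, (0, 0), -x.2.1.1)

/-- The unit `1 ∈ Λ⁰g*`. -/
def one : LamG := (1, (0, 0), 0)

/-- The basis 1-form `z₁`. -/
def z1 : LamG := (0, (1, 0), 0)

/-- The basis 1-form `z₂` (the deforming closed 1-form `φ`). -/
def z2 : LamG := (0, (0, 1), 0)

/-- The top form `z₁ ∧ z₂`. -/
def w12 : LamG := (0, (0, 0), 1)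

/-- The deformed standard bracket
`[α,β]_{t,φ} = (-1)^a d(α∧β) + ((a+b+2)/2) α ∧ tz₂ ∧ β` for `α` of degree `a`
and `β` of degree `b`, with deforming 1-form `φ = z₂`. -/
noncomputable def bkt (t : ℝ) (a b : ℕ) (x y : LamG) : LamG :=
  ((-1 : ℝ) ^ a) • dCE (wedge x y) +
    (((a : ℝ) + (b : ℝ) + 2) / 2) • wedge x (wedge (t • z2) y)

end LamG

open LamG in
/-- For the 2-dimensional Lie algebra with `[y₁,y₂] = y₁`, dual basis
`z₁, z₂` and deforming closed 1-form `φ = z₂`, the boundary operator of the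
weight-(−3) chain complex of the deformed standard bracket satisfies
`∂(z₁⊼1) = (1 + (3/2)t) z₁∧z₂`, `∂(z₂⊼1) = 0`, `∂(⊼³1) = t z₂⊼1`
(via `[1,1]_{t,φ} = t z₂`), and the weight-(−3) Betti numbers in degrees
`1, 2, 3` are `(δ_{2+3t,0}, δ_{2+3t,0} + δ_{t,0}, δ_{t,0})`.
Here `C₁ ≅ ℝ` (basis `z₁∧z₂`), `C₂ ≅ ℝ²` (basis `z₁⊼1, z₂⊼1`), `C₃ ≅ ℝ`
(basis `⊼³1`); `D2`, `D3` are the boundary maps computed from the bracket,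
`∂₂(c₁,c₂) = ` coefficient of `z₁∧z₂` in `c₁[z₁,1] + c₂[z₂,1]`, and
`∂₃ c = ` the degree-1 part of `c[1,1]` (the coefficients of `z_j ⊼ 1`). -/
theorem stmt_15 (t : ℝ) (D2 : ℝ × ℝ →ₗ[ℝ] ℝ) (D3 : ℝ →ₗ[ℝ] ℝ × ℝ)
    (hD2 : ∀ c : ℝ × ℝ,
      D2 c = (c.1 • bkt t 1 0 z1 one + c.2 • bkt t 1 0 z2 one).2.2)
    (hD3 : ∀ c : ℝ, D3 c = (c • bkt t 0 0 one one).2.1) :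
    (bkt t 1 0 z1 one = (1 + (3 / 2) * t) • w12 ∧
      bkt t 1 0 z2 one = 0 ∧
      bkt t 0 0 one one = t • z2) ∧
    (1 - Module.finrank ℝ (LinearMap.range D2) =
      if (2 + 3 * t : ℝ) = 0 then 1 else 0) ∧
    (Module.finrank ℝ (LinearMap.ker D2) -
        Module.finrank ℝ (LinearMap.range D3) =
      (if (2 + 3 * t : ℝ) = 0 then 1 else 0) + (if t = 0 then 1 else 0)) ∧
    (Module.finrank ℝ (LinearMap.ker D3) = if t = 0 then 1 else 0) := by
  have hb1 : bkt t 1 0 z1 one = (1 + (3 / 2) * t) • w12 := by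
    simp only [bkt, dCE, wedge, z1, z2, one, w12, Prod.smul_mk, smul_eq_mul,
      Prod.mk_add_mk, Prod.mk.injEq]
    norm_num
  have hb2 : bkt t 1 0 z2 one = 0 := by
    simp only [bkt, dCE, wedge, z1, z2, one, w12, Prod.smul_mk, smul_eq_mul,
      Prod.mk_add_mk, Prod.mk.injEq]
    norm_num
  have hb3 : bkt t 0 0 one one = t • z2 := by
    simp only [bkt, dCE, wedge, z1, z2, one, w12, Prod.smul_mk, smul_eq_mul,
      Prod.mk_add_mk, Prod.mk.injEq]
    norm_num
  have hD2' : ∀ c : ℝ × ℝ, D2 c = c.1 * (1 + (3 / 2) * t) := by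
    intro c
    rw [hD2, hb1, hb2]
    simp [w12, Prod.smul_mk, smul_eq_mul]
  have hD3' : ∀ c : ℝ, D3 c = (0, c * t) := by
    intro c
    rw [hD3, hb3]
    simp [z2, Prod.smul_mk, smul_eq_mul, mul_comm]
  have hkey : (2 + 3 * t : ℝ) = 0 ↔ (1 + (3 / 2) * t : ℝ) = 0 := by
    constructor <;> intro h <;> linarith
  have fP : Module.finrank ℝ (ℝ × ℝ) = 2 := by
    simp [Module.finrank_prod]
  have fR : Module.finrank ℝ ℝ = 1 := Module.finrank_self ℝ
  have hrange2 : Module.finrank ℝ (LinearMap.range D2) =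
      if (2 + 3 * t : ℝ) = 0 then 0 else 1 := by
    by_cases h : (2 + 3 * t : ℝ) = 0
    · rw [if_pos h]
      have hz : D2 = 0 := LinearMap.ext fun c => by
        rw [hD2' c, hkey.mp h, mul_zero]; rfl
      rw [hz, LinearMap.range_zero, finrank_bot]
    · rw [if_neg h]
      have hne : (1 + (3 / 2) * t : ℝ) ≠ 0 := fun hc => h (hkey.mpr hc)
      have hs : Function.Surjective D2 := fun r =>
        ⟨(r / (1 + (3 / 2) * t), 0), by rw [hD2']; field_simp⟩
      rw [LinearMap.range_eq_top.mpr hs, finrank_top, fR]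
  have hker2 : Module.finrank ℝ (LinearMap.ker D2) =
      if (2 + 3 * t : ℝ) = 0 then 2 else 1 := by
    have h2 := LinearMap.finrank_range_add_finrank_ker D2
    rw [fP, hrange2] at h2
    by_cases h : (2 + 3 * t : ℝ) = 0
    · rw [if_pos h] at h2 ⊢; omega
    · rw [if_neg h] at h2 ⊢; omega
  have hker3 : Module.finrank ℝ (LinearMap.ker D3) =
      if t = 0 then 1 else 0 := by
    by_cases h : t = 0
    · rw [if_pos h]
      have hz : D3 = 0 := LinearMap.ext fun c => by simp [hD3', h]
      rw [hz, LinearMap.ker_zero, finrank_top, fR]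
    · rw [if_neg h]
      have hi : Function.Injective D3 := by
        intro a b hab
        rw [hD3' a, hD3' b, Prod.mk.injEq] at hab
        exact mul_right_cancel₀ h hab.2
      rw [LinearMap.ker_eq_bot.mpr hi, finrank_bot]
  have hrange3 : Module.finrank ℝ (LinearMap.range D3) =
      if t = 0 then 0 else 1 := by
    have h2 := LinearMap.finrank_range_add_finrank_ker D3
    rw [fR, hker3] at h2
    by_cases h : t = 0
    · rw [if_pos h] at h2 ⊢; omega
    · rw [if_neg h] at h2 ⊢; omega
  refine ⟨⟨hb1, hb2, hb3⟩, ?_, ?_, hker3⟩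
  · rw [hrange2]
    by_cases h : (2 + 3 * t : ℝ) = 0 <;> simp [h]
  · rw [hker2, hrange3]
    by_cases h : (2 + 3 * t : ℝ) = 0 <;> by_cases h' : t = 0 <;>
        simp only [h, h', if_pos, if_neg, if_true, if_false]
    · exfalso; rw [h'] at h; norm_num at h
    all_goals norm_num
end

section
/- For a Lie superalgebra g = ⊕ g_i with homology boundary operator ∂ on the super chain spaces, and homogeneous decomposable chains A = A₁⊼…⊼A_p, B = B₁⊼…⊼B_q, define [A,B] := ∂(A⊼B) − (∂A)⊼B − (−1)^p A⊼(∂B). Then [A,B] equals the double sum Σ_{i,j} (−1)^{i + a_i Σ_{s>i} a_s + j + b_j(1 + Σ_{s≤j} b_s)} A₁⊼…Â_i…⊼A_p ⊼ [A_i,B_j] ⊼ B₁⊼…B̂_j…⊼B_q. -/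
section helpers

lemma neg_one_zpow_congr {a b : ℤ} (h : Even (a - b)) : (-1:ℝ)^a = (-1:ℝ)^b := by
  have h2 : (-1:ℝ)^a = (-1:ℝ)^(b + (a-b)) := by ring_nf
  rw [h2, zpow_add₀ (by norm_num : (-1:ℝ) ≠ 0), h.neg_one_zpow, mul_one]

lemma neg_one_zpow_sum {ι : Type*} (s : Finset ι) (f : ι → ℤ) :
    ∏ i ∈ s, ((-1:ℝ) ^ (f i)) = (-1:ℝ) ^ (∑ i ∈ s, f i) := by
  classical
  induction s using Finset.induction with
  | empty => simp
  | insert _ _ h ih =>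
      rw [Finset.prod_insert h, Finset.sum_insert h, ih,
        ← zpow_add₀ (by norm_num : (-1:ℝ) ≠ 0)]

section sums
variable {M : Type*} [AddCommMonoid M] {p q : ℕ}

lemma sum_Ioo_castAdd (i j : Fin p) (f : Fin (p+q) → M) :
    ∑ s ∈ Finset.Ioo (Fin.castAdd q i) (Fin.castAdd q j), f s
      = ∑ s ∈ Finset.Ioo i j, f (Fin.castAdd q s) := by
  classical
  rw [← Finset.univ_inter (Finset.Ioo (Fin.castAdd q i) (Fin.castAdd q j)),
    ← Finset.sum_ite_mem,
    ← Finset.univ_inter (Finset.Ioo i j), ← Finset.sum_ite_mem,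
    Fin.sum_univ_add]
  simp only [Finset.mem_Ioo, Fin.lt_def, Fin.coe_castAdd, Fin.coe_natAdd]
  have h2 : ∀ s : Fin q, ¬ ((i:ℕ) < p + s ∧ p + s < (j:ℕ)) := by
    intro s; have := j.isLt; omega
  rw [Finset.sum_congr rfl (fun s _ => if_neg (h2 s)), Finset.sum_const_zero, add_zero]

lemma sum_Ioo_natAdd (i j : Fin q) (f : Fin (p+q) → M) :
    ∑ s ∈ Finset.Ioo (Fin.natAdd p i) (Fin.natAdd p j), f s
      = ∑ s ∈ Finset.Ioo i j, f (Fin.natAdd p s) := by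
  classical
  rw [← Finset.univ_inter (Finset.Ioo (Fin.natAdd p i) (Fin.natAdd p j)),
    ← Finset.sum_ite_mem,
    ← Finset.univ_inter (Finset.Ioo i j), ← Finset.sum_ite_mem,
    Fin.sum_univ_add]
  simp only [Finset.mem_Ioo, Fin.lt_def, Fin.coe_castAdd, Fin.coe_natAdd]
  have h1 : ∀ s : Fin p, ¬ ((p + (i:ℕ) < s ∧ (s:ℕ) < p + j)) := by
    intro s; have := s.isLt; omega
  rw [Finset.sum_congr rfl (fun s _ => if_neg (h1 s)), Finset.sum_const_zero, zero_add]
  exact Finset.sum_congr rfl fun s _ => by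
    congr 1
    simp only [eq_iff_iff]
    omega

lemma sum_Ioo_cross (i : Fin p) (j : Fin q) (f : Fin (p+q) → M) :
    ∑ s ∈ Finset.Ioo (Fin.castAdd q i) (Fin.natAdd p j), f s
      = (∑ s ∈ Finset.Ioi i, f (Fin.castAdd q s))
        + ∑ s ∈ Finset.Iio j, f (Fin.natAdd p s) := by
  classical
  rw [← Finset.univ_inter (Finset.Ioo (Fin.castAdd q i) (Fin.natAdd p j)),
    ← Finset.sum_ite_mem,
    ← Finset.univ_inter (Finset.Ioi i), ← Finset.sum_ite_mem,
    ← Finset.univ_inter (Finset.Iio j), ← Finset.sum_ite_mem,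
    Fin.sum_univ_add]
  simp only [Finset.mem_Ioo, Fin.lt_def, Fin.coe_castAdd, Fin.coe_natAdd,
    Finset.mem_Ioi, Finset.mem_Iio]
  congr 1
  · exact Finset.sum_congr rfl fun s _ => by
      congr 1; simp only [eq_iff_iff]; have := s.isLt; have := j.isLt; omega
  · exact Finset.sum_congr rfl fun s _ => by
      congr 1; simp only [eq_iff_iff]; have := i.isLt; omega

lemma sum_take_natAdd (j : Fin q) (f : Fin (p+q) → M) :
    ∑ k : Fin (j:ℕ), f (Fin.natAdd p (Fin.castLE j.isLt.le k))
      = ∑ s ∈ Finset.Iio j, f (Fin.natAdd p s) := by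
  classical
  refine Finset.sum_bij' (fun k _ => Fin.castLE j.isLt.le k)
    (fun s hs => ⟨(s:ℕ), show (s:ℕ) < (j:ℕ) from Fin.lt_def.mp (Finset.mem_Iio.mp hs)⟩)
    (fun k _ => Finset.mem_Iio.mpr (Fin.lt_def.mpr (by simp)))
    (fun s hs => Finset.mem_univ _) ?_ ?_ ?_
  · intro k _; ext; simp
  · intro s hs; ext; simp
  · intro k _; rfl

end sums

variable {A : Type*} [Ring A] [Algebra ℝ A]

lemma prod_ofFn_mul_comm (c : A) : ∀ (m : ℕ) (Z : Fin m → A) (σ : Fin m → ℝ),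
    (∀ k, Z k * c = σ k • (c * Z k)) →
    (List.ofFn Z).prod * c = (∏ k, σ k) • (c * (List.ofFn Z).prod) := by
  intro m
  induction m with
  | zero => intro Z σ h; simp
  | succ n ih =>
    intro Z σ h
    rw [List.ofFn_succ, List.prod_cons, Fin.prod_univ_succ, mul_assoc,
      ih _ (fun k => σ k.succ) (fun k => h k.succ), mul_smul_comm, ← mul_assoc, h 0,
      smul_mul_assoc, smul_smul, mul_comm ((∏ k : Fin n, σ k.succ)) (σ 0), mul_assoc]

lemma neg_neg_one_zpow_sq (e : ℤ) : (-(-1:ℝ)^e) * (-(-1:ℝ)^e) = 1 := by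
  rw [neg_mul_neg, ← zpow_add₀ (by norm_num : (-1:ℝ) ≠ 0)]
  exact (Even.add_self e).neg_one_zpow

lemma hswap_of_hcomm {n : ℕ} (Y : Fin n → A) (y : Fin n → ℤ) (br : Fin n → Fin n → A)
    (hcomm : ∀ i j s : Fin n,
      br i j * Y s = (-(-1 : ℝ) ^ ((y i + y j) * y s)) • (Y s * br i j)) :
    ∀ i j s : Fin n,
      Y s * br i j = (-(-1 : ℝ) ^ ((y i + y j) * y s)) • (br i j * Y s) := by
  intro i j s
  have h := hcomm i j s
  have h2 := congrArg (fun x => (-(-1 : ℝ) ^ ((y i + y j) * y s)) • x) h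
  simp only [smul_smul, neg_neg_one_zpow_sq, one_smul] at h2
  exact h2.symm

lemma set_prod_eq {p q : ℕ} (Y : Fin (p+q) → A) (y : Fin (p+q) → ℤ)
    (j : Fin q) (c : A) (e : ℤ)
    (hsw : ∀ s : Fin q, Y (Fin.natAdd p s) * c
      = (-(-1:ℝ)^(e * y (Fin.natAdd p s))) • (c * Y (Fin.natAdd p s))) :
    ((List.ofFn (Y ∘ Fin.natAdd p)).set (j:ℕ) c).prod
      = ((-1:ℝ)^(e * (∑ s ∈ Finset.Iio j, y (Fin.natAdd p s)) + (j:ℕ))) •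
        (c * ((List.ofFn (Y ∘ Fin.natAdd p)).eraseIdx (j:ℕ)).prod) := by
  have hj : (j:ℕ) < (List.ofFn (Y ∘ Fin.natAdd p)).length := by
    simp [List.length_ofFn]
  rw [List.set_eq_take_append_cons_drop, if_pos hj, List.prod_append, List.prod_cons,
    List.eraseIdx_eq_take_drop_succ, List.prod_append]
  rw [← Fin.ofFn_take_eq_take_ofFn j.isLt.le (Y ∘ Fin.natAdd p)]
  have hmove := prod_ofFn_mul_comm c (j:ℕ)
    (Fin.take (j:ℕ) j.isLt.le (Y ∘ Fin.natAdd p))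
    (fun k => -(-1:ℝ)^(e * y (Fin.natAdd p (Fin.castLE j.isLt.le k))))
    (fun k => hsw (Fin.castLE j.isLt.le k))
  rw [← mul_assoc, hmove, smul_mul_assoc, mul_assoc]
  congr 1
  have h3 : ∀ k : Fin (j:ℕ), (-(-1:ℝ)^(e * y (Fin.natAdd p (Fin.castLE j.isLt.le k))))
      = (-1:ℝ)^(e * y (Fin.natAdd p (Fin.castLE j.isLt.le k)) + 1) := by
    intro k
    rw [zpow_add₀ (by norm_num : (-1:ℝ) ≠ 0), zpow_one, mul_neg_one]
  rw [Finset.prod_congr rfl (fun k _ => h3 k), neg_one_zpow_sum]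
  congr 1
  rw [Finset.sum_add_distrib, ← Finset.mul_sum, sum_take_natAdd j y, Finset.sum_const,
    Finset.card_univ, Fintype.card_fin, nsmul_eq_mul, mul_one]

end helpers

open Finset in
noncomputable def bdryFormula {A : Type*} [Ring A] [Algebra ℝ A] (m : ℕ)
    (Y : Fin m → A) (y : Fin m → ℤ) (br : Fin m → Fin m → A) : A :=
  ∑ i : Fin m, ∑ j : Fin m,
    if i < j then
      ((-1 : ℝ) ^ ((i : ℤ) + y i * ∑ s ∈ Finset.Ioo i j, y s)) •
        ((((List.ofFn Y).set j (br i j)).eraseIdx i).prod)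
    else 0

/-- For homogeneous decomposable chains `A = A₁⊼⋯⊼A_p` and `B = B₁⊼⋯⊼B_q`
(modelled as the products of the first `p` and the last `q` of the factors
`Y : Fin (p+q) → A`), the bracket
`[A,B] := ∂(A⊼B) - (∂A)⊼B - (-1)^p A⊼(∂B)` equals
`Σ_{i,j} (-1)^{i + a_i Σ_{s>i} a_s + j + b_j(1 + Σ_{s≤j} b_s)}
  A₁⊼⋯Â_i⋯⊼A_p ⊼ [A_i,B_j] ⊼ B₁⊼⋯B̂_j⋯⊼B_q`
(indices `i`, `j` 1-based in the sign, as in the paper). -/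
theorem stmt_16 {A : Type*} [Ring A] [Algebra ℝ A] (p q : ℕ)
    (Y : Fin (p + q) → A) (y : Fin (p + q) → ℤ)
    (br : Fin (p + q) → Fin (p + q) → A)
    (D : A →ₗ[ℝ] A)
    (hD : D ((List.ofFn Y).prod) = bdryFormula (p + q) Y y br)
    (hDA : D ((List.ofFn (Y ∘ Fin.castAdd q)).prod) =
      bdryFormula p (Y ∘ Fin.castAdd q) (y ∘ Fin.castAdd q)
        (fun i j => br (Fin.castAdd q i) (Fin.castAdd q j)))
    (hDB : D ((List.ofFn (Y ∘ Fin.natAdd p)).prod) =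
      bdryFormula q (Y ∘ Fin.natAdd p) (y ∘ Fin.natAdd p)
        (fun i j => br (Fin.natAdd p i) (Fin.natAdd p j)))
    (hcomm : ∀ i j s : Fin (p + q),
      br i j * Y s = (-(-1 : ℝ) ^ ((y i + y j) * y s)) • (Y s * br i j)) :
    D ((List.ofFn (Y ∘ Fin.castAdd q)).prod * (List.ofFn (Y ∘ Fin.natAdd p)).prod) -
        D ((List.ofFn (Y ∘ Fin.castAdd q)).prod) * (List.ofFn (Y ∘ Fin.natAdd p)).prod -
        ((-1 : ℝ) ^ p) •
          ((List.ofFn (Y ∘ Fin.castAdd q)).prod * D ((List.ofFn (Y ∘ Fin.natAdd p)).prod)) =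
      ∑ i : Fin p, ∑ j : Fin q,
        ((-1 : ℝ) ^
            (((i : ℤ) + 1) +
              y (Fin.castAdd q i) * (∑ s ∈ Finset.Ioi i, y (Fin.castAdd q s)) +
              ((j : ℤ) + 1) +
              y (Fin.natAdd p j) * (1 + ∑ s ∈ Finset.Iic j, y (Fin.natAdd p s)))) •
          (((List.ofFn (Y ∘ Fin.castAdd q)).eraseIdx i).prod *
            br (Fin.castAdd q i) (Fin.natAdd p j) *
            ((List.ofFn (Y ∘ Fin.natAdd p)).eraseIdx j).prod) := by
  classical
  have hswap := hswap_of_hcomm Y y br hcomm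
  have hsplit : List.ofFn Y
      = List.ofFn (Y ∘ Fin.castAdd q) ++ List.ofFn (Y ∘ Fin.natAdd p) := by
    rw [List.ofFn_add]; rfl
  have hprod : (List.ofFn Y).prod
      = (List.ofFn (Y ∘ Fin.castAdd q)).prod * (List.ofFn (Y ∘ Fin.natAdd p)).prod := by
    rw [hsplit, List.prod_append]
  let T : Fin (p+q) → Fin (p+q) → A := fun i j =>
    if i < j then
      ((-1 : ℝ) ^ ((i : ℤ) + y i * ∑ s ∈ Finset.Ioo i j, y s)) •
        ((((List.ofFn Y).set j (br i j)).eraseIdx i).prod)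
    else 0
  have hT : ∀ i j, T i j = if i < j then
      ((-1 : ℝ) ^ ((i : ℤ) + y i * ∑ s ∈ Finset.Ioo i j, y s)) •
        ((((List.ofFn Y).set j (br i j)).eraseIdx i).prod)
    else 0 := fun i j => rfl
  have hbd : bdryFormula (p + q) Y y br = ∑ i, ∑ j, T i j := rfl
  have expand : (∑ i : Fin (p+q), ∑ j : Fin (p+q), T i j)
      = (∑ i : Fin p, ∑ j : Fin p, T (Fin.castAdd q i) (Fin.castAdd q j))
        + (∑ i : Fin p, ∑ j : Fin q, T (Fin.castAdd q i) (Fin.natAdd p j))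
        + ((∑ i : Fin q, ∑ j : Fin p, T (Fin.natAdd p i) (Fin.castAdd q j))
        + (∑ i : Fin q, ∑ j : Fin q, T (Fin.natAdd p i) (Fin.natAdd p j))) := by
    rw [Fin.sum_univ_add]
    congr 1
    · rw [← Finset.sum_add_distrib]
      exact Finset.sum_congr rfl fun i _ => Fin.sum_univ_add _
    · rw [← Finset.sum_add_distrib]
      exact Finset.sum_congr rfl fun i _ => Fin.sum_univ_add _
  have Q1 : (∑ i : Fin p, ∑ j : Fin p, T (Fin.castAdd q i) (Fin.castAdd q j))
      = bdryFormula p (Y ∘ Fin.castAdd q) (y ∘ Fin.castAdd q)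
          (fun i j => br (Fin.castAdd q i) (Fin.castAdd q j))
        * (List.ofFn (Y ∘ Fin.natAdd p)).prod := by
    simp only [bdryFormula, Finset.sum_mul]
    refine Finset.sum_congr rfl fun i _ => ?_
    refine Finset.sum_congr rfl fun j _ => ?_
    rw [hT, ite_mul, zero_mul]
    by_cases hij : i < j
    · rw [if_pos (show Fin.castAdd q i < Fin.castAdd q j by
        simp only [Fin.lt_def, Fin.coe_castAdd]; exact hij), if_pos hij, smul_mul_assoc]
      congr 1
      · congr 1
        simp only [Fin.coe_castAdd, Function.comp_apply, sum_Ioo_castAdd]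
      · simp only [Fin.coe_castAdd]
        rw [hsplit, List.set_append,
          if_pos (show (j:ℕ) < (List.ofFn (Y ∘ Fin.castAdd q)).length by
            simpa using j.isLt),
          List.eraseIdx_append_of_lt_length (by simpa using i.isLt) _, List.prod_append]
    · rw [if_neg (show ¬ Fin.castAdd q i < Fin.castAdd q j by
        simp only [Fin.lt_def, Fin.coe_castAdd]; exact hij), if_neg hij]
  have Q3 : (∑ i : Fin q, ∑ j : Fin p, T (Fin.natAdd p i) (Fin.castAdd q j)) = 0 := by
    refine Finset.sum_eq_zero fun i _ => Finset.sum_eq_zero fun j _ => ?_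
    rw [hT, if_neg]
    have hj := j.isLt
    simp only [Fin.lt_def, Fin.coe_natAdd, Fin.coe_castAdd]
    omega
  have Q4 : (∑ i : Fin q, ∑ j : Fin q, T (Fin.natAdd p i) (Fin.natAdd p j))
      = ((-1:ℝ)^p) • ((List.ofFn (Y ∘ Fin.castAdd q)).prod *
          bdryFormula q (Y ∘ Fin.natAdd p) (y ∘ Fin.natAdd p)
            (fun i j => br (Fin.natAdd p i) (Fin.natAdd p j))) := by
    simp only [bdryFormula, Finset.mul_sum, Finset.smul_sum]
    refine Finset.sum_congr rfl fun i _ => ?_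
    refine Finset.sum_congr rfl fun j _ => ?_
    rw [hT]
    by_cases hij : i < j
    · rw [if_pos (show Fin.natAdd p i < Fin.natAdd p j by
        simp only [Fin.lt_def, Fin.coe_natAdd]; exact Nat.add_lt_add_left hij p),
        if_pos hij, mul_smul_comm, smul_smul]
      congr 1
      · rw [← zpow_natCast (-1:ℝ) p, ← zpow_add₀ (by norm_num : (-1:ℝ) ≠ 0)]
        congr 1
        simp only [Fin.coe_natAdd, Function.comp_apply, sum_Ioo_natAdd, Nat.cast_add]
        rw [add_assoc, Finset.mul_sum]
      · simp only [Fin.coe_natAdd]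
        rw [hsplit, List.set_append,
          if_neg (show ¬ (p + (j:ℕ) < (List.ofFn (Y ∘ Fin.castAdd q)).length) by simp),
          List.eraseIdx_append_of_length_le (by simp) _, List.prod_append]
        simp [Function.comp]
    · rw [if_neg (show ¬ Fin.natAdd p i < Fin.natAdd p j by
        simp only [Fin.lt_def, Fin.coe_natAdd]; omega), if_neg hij]
      simp
  have Q2 : (∑ i : Fin p, ∑ j : Fin q, T (Fin.castAdd q i) (Fin.natAdd p j))
      = ∑ i : Fin p, ∑ j : Fin q,
          ((-1 : ℝ) ^
              (((i : ℤ) + 1) +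
                y (Fin.castAdd q i) * (∑ s ∈ Finset.Ioi i, y (Fin.castAdd q s)) +
                ((j : ℤ) + 1) +
                y (Fin.natAdd p j) * (1 + ∑ s ∈ Finset.Iic j, y (Fin.natAdd p s)))) •
            (((List.ofFn (Y ∘ Fin.castAdd q)).eraseIdx i).prod *
              br (Fin.castAdd q i) (Fin.natAdd p j) *
              ((List.ofFn (Y ∘ Fin.natAdd p)).eraseIdx j).prod) := by
    refine Finset.sum_congr rfl fun i _ => Finset.sum_congr rfl fun j _ => ?_
    rw [hT, if_pos (show Fin.castAdd q i < Fin.natAdd p j by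
      have := i.isLt
      simp only [Fin.lt_def, Fin.coe_castAdd, Fin.coe_natAdd]
      omega)]
    simp only [Fin.coe_castAdd, Fin.coe_natAdd]
    rw [hsplit, List.set_append,
      if_neg (show ¬ (p + (j:ℕ) < (List.ofFn (Y ∘ Fin.castAdd q)).length) by simp),
      List.eraseIdx_append_of_lt_length (by simpa using i.isLt) _, List.prod_append]
    simp only [List.length_ofFn, Nat.add_sub_cancel_left]
    rw [set_prod_eq Y y j (br (Fin.castAdd q i) (Fin.natAdd p j))
        (y (Fin.castAdd q i) + y (Fin.natAdd p j))
        (fun s => hswap (Fin.castAdd q i) (Fin.natAdd p j) (Fin.natAdd p s)),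
      mul_smul_comm, smul_smul, ← zpow_add₀ (by norm_num : (-1:ℝ) ≠ 0), mul_assoc]
    congr 1
    rw [sum_Ioo_cross]
    have hIic : ∑ s ∈ Finset.Iic j, y (Fin.natAdd p s)
        = y (Fin.natAdd p j) + ∑ s ∈ Finset.Iio j, y (Fin.natAdd p s) := by
      rw [← Finset.Iio_insert, Finset.sum_insert (by simp)]
    rw [hIic]
    apply neg_one_zpow_congr
    obtain ⟨k, hk⟩ := Int.even_mul_succ_self (y (Fin.natAdd p j))
    exact ⟨y (Fin.castAdd q i) * (∑ s ∈ Finset.Iio j, y (Fin.natAdd p s)) - 1 - k,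
      by push_cast; linear_combination -hk⟩
  rw [← hprod, hD, hDA, hDB, hbd, expand, Q1, Q2, Q3, Q4]
  abel
end
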